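/- Let q = p^r be an odd prime power with q > 3, and let g be an element of PGL(2,q) of order exactly (q+1)/2 acting on the projective line PL(F_q). Then the cyclic group generated by g has exactly two orbits on PL(F_q), each of size (q+1)/2. -/

import Mathlib

open Matrix Projectivization
open scoped LinearAlgebra.Projectivization

variable {F : Type*} [Field F]

noncomputable instance glProjAction :
    MulAction (GL (Fin 2) F) (ℙ F (Fin 2 → F)) where
  smul g x := Projectivization.map (Matrix.mulVecLin (g : Matrix (Fin 2) (Fin 2) F))
    ((Matrix.GeneralLinearGroup.toLin g).toLinearEquiv.injective) x
  one_smul x := by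
    show Projectivization.map _ _ x = x
    have h1 : Matrix.mulVecLin ((1 : GL (Fin 2) F) : Matrix (Fin 2) (Fin 2) F)
        = (LinearMap.id : (Fin 2 → F) →ₗ[F] (Fin 2 → F)) := by simp
    simp only [h1, Projectivization.map_id, id_eq]
  mul_smul a b x := by
    show Projectivization.map _ _ x = Projectivization.map _ _ (Projectivization.map _ _ x)
    have h1 : Matrix.mulVecLin ((a * b : GL (Fin 2) F) : Matrix (Fin 2) (Fin 2) F)
        = (Matrix.mulVecLin (a : Matrix (Fin 2) (Fin 2) F)).comp
            (Matrix.mulVecLin (b : Matrix (Fin 2) (Fin 2) F)) := by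
      simp [Matrix.mulVecLin_mul]
    simp only [h1]
    rw [Projectivization.map_comp]
    rfl

/-- The linear fractional (Möbius) action of `GL(2,F)` on the projective line,
as a homomorphism to permutations. -/
noncomputable def mobius : GL (Fin 2) F →* Equiv.Perm (ℙ F (Fin 2 → F)) :=
  MulAction.toPermHom (GL (Fin 2) F) (ℙ F (Fin 2 → F))

lemma aux_mulVec_ne_zero (h : GL (Fin 2) F) {v : Fin 2 → F} (hv : v ≠ 0) :
    (h : Matrix (Fin 2) (Fin 2) F) *ᵥ v ≠ 0 := fun h0 =>
  hv (((Matrix.GeneralLinearGroup.toLin h).toLinearEquiv.injective)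
    (by simp [Matrix.mulVecLin_apply, h0]))

lemma mobius_mk (h : GL (Fin 2) F) (v : Fin 2 → F) (hv : v ≠ 0) :
    mobius h (Projectivization.mk F v hv) =
      Projectivization.mk F ((h : Matrix (Fin 2) (Fin 2) F) *ᵥ v) (aux_mulVec_ne_zero h hv) :=
  rfl

/-- an eigenvector equation for each fixed point -/
lemma aux_eigen (h : GL (Fin 2) F) {x : ℙ F (Fin 2 → F)} (hx : mobius h x = x) :
    ∃ c : Fˣ, (h : Matrix (Fin 2) (Fin 2) F) *ᵥ x.rep = (c : F) • x.rep := by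
  have h1 : mobius h (Projectivization.mk F x.rep x.rep_nonzero) =
      Projectivization.mk F x.rep x.rep_nonzero := by rw [Projectivization.mk_rep]; exact hx
  rw [mobius_mk] at h1
  obtain ⟨c, hc⟩ := (Projectivization.mk_eq_mk_iff F _ _ _ x.rep_nonzero).mp h1
  exact ⟨c, hc.symm⟩

lemma aux_mk_eq_of_smul {v w : Fin 2 → F} (hv : v ≠ 0) (hw : w ≠ 0) {c : F} (hc : c ≠ 0)
    (h : v = c • w) : Projectivization.mk F v hv = Projectivization.mk F w hw :=
  (Projectivization.mk_eq_mk_iff F _ _ _ _).mpr ⟨Units.mk0 c hc, h.symm⟩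

lemma mobius_eq_one_of_three_fixed (h : GL (Fin 2) F)
    {x₁ x₂ x₃ : ℙ F (Fin 2 → F)} (h12 : x₁ ≠ x₂) (h13 : x₁ ≠ x₃) (h23 : x₂ ≠ x₃)
    (f1 : mobius h x₁ = x₁) (f2 : mobius h x₂ = x₂) (f3 : mobius h x₃ = x₃) :
    mobius h = 1 := by
  set M := (h : Matrix (Fin 2) (Fin 2) F) with hM
  obtain ⟨c₁, hc₁⟩ := aux_eigen h f1
  obtain ⟨c₂, hc₂⟩ := aux_eigen h f2
  obtain ⟨c₃, hc₃⟩ := aux_eigen h f3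
  set v₁ := x₁.rep with hv₁
  set v₂ := x₂.rep with hv₂
  set v₃ := x₃.rep with hv₃
  have hn₁ : v₁ ≠ 0 := x₁.rep_nonzero
  have hn₂ : v₂ ≠ 0 := x₂.rep_nonzero
  have hn₃ : v₃ ≠ 0 := x₃.rep_nonzero
  -- distinctness as non-proportionality
  have hx₁ : Projectivization.mk F v₁ hn₁ = x₁ := Projectivization.mk_rep x₁
  have hx₂ : Projectivization.mk F v₂ hn₂ = x₂ := Projectivization.mk_rep x₂
  have hx₃ : Projectivization.mk F v₃ hn₃ = x₃ := Projectivization.mk_rep x₃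
  have hpair : ∀ s t : F, s • v₁ + t • v₂ = 0 → s = 0 ∧ t = 0 := by
    intro s t hst
    by_cases hs : s = 0
    · subst hs
      rw [zero_smul, zero_add] at hst
      rcases smul_eq_zero.mp hst with ht | hv
      · exact ⟨rfl, ht⟩
      · exact absurd hv hn₂
    · exfalso
      have ht : t ≠ 0 := by
        intro ht; rw [ht, zero_smul, add_zero] at hst
        exact hn₁ (by rcases smul_eq_zero.mp hst with h' | h' <;> [exact absurd h' hs; exact h'])
      have hveq : v₁ = (-(s⁻¹ * t)) • v₂ := by
        have : s • v₁ = -(t • v₂) := by linear_combination (norm := module) hst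
        calc v₁ = s⁻¹ • (s • v₁) := by rw [smul_smul, inv_mul_cancel₀ hs, one_smul]
        _ = (-(s⁻¹ * t)) • v₂ := by rw [this, smul_neg, smul_smul]; rw [neg_smul]
      exact h12 (by rw [← hx₁, ← hx₂]; exact aux_mk_eq_of_smul hn₁ hn₂ (by simp [hs, ht]) hveq)
  have hli : LinearIndependent F ![v₁, v₂] :=
    LinearIndependent.pair_iff.mpr fun s t hst => hpair s t hst
  have hcardeq : Fintype.card (Fin 2) = Module.finrank F (Fin 2 → F) := by
    simp [Module.finrank_fin_fun]
  let B := basisOfLinearIndependentOfCardEqFinrank hli hcardeq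
  have hB : ⇑B = ![v₁, v₂] := coe_basisOfLinearIndependentOfCardEqFinrank hli hcardeq
  have hrepr : ∀ w : Fin 2 → F, w = (B.repr w 0) • v₁ + (B.repr w 1) • v₂ := by
    intro w
    have htw := B.sum_repr w
    rw [Fin.sum_univ_two] at htw
    conv_lhs => rw [← htw]
    rw [hB]
    simp
  set a := B.repr v₃ 0 with ha'
  set b := B.repr v₃ 1 with hb'
  have hv3 : v₃ = a • v₁ + b • v₂ := hrepr v₃
  have ha : a ≠ 0 := by
    intro h0
    rw [h0, zero_smul, zero_add] at hv3
    have hb0 : b ≠ 0 := by intro h1; rw [h1, zero_smul] at hv3; exact hn₃ hv3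
    exact h23 (by rw [← hx₂, ← hx₃]; exact (aux_mk_eq_of_smul hn₃ hn₂ hb0 hv3).symm)
  have hb : b ≠ 0 := by
    intro h0
    rw [h0, zero_smul, add_zero] at hv3
    exact h13 (by rw [← hx₁, ← hx₃]; exact (aux_mk_eq_of_smul hn₃ hn₁ ha hv3).symm)
  -- eigenvalue comparison
  have hM3 : M *ᵥ v₃ = (a * (c₁ : F)) • v₁ + (b * (c₂ : F)) • v₂ := by
    rw [hv3, Matrix.mulVec_add, Matrix.mulVec_smul, Matrix.mulVec_smul, hc₁, hc₂,
      smul_smul, smul_smul]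
  have hM3' : M *ᵥ v₃ = ((c₃ : F) * a) • v₁ + ((c₃ : F) * b) • v₂ := by
    rw [hc₃, hv3, smul_add, smul_smul, smul_smul]
  have hzero : (a * (c₁ : F) - (c₃ : F) * a) • v₁ + (b * (c₂ : F) - (c₃ : F) * b) • v₂ = 0 := by
    have h' := hM3.symm.trans hM3'
    linear_combination (norm := module) h'
  obtain ⟨e1, e2⟩ := hpair _ _ hzero
  have hc13 : (c₁ : F) = c₃ := by
    have h' : a * (c₁ : F) = (c₃ : F) * a := sub_eq_zero.mp e1
    rw [mul_comm ((c₃ : F)) a] at h'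
    exact mul_left_cancel₀ ha h'
  have hc23 : (c₂ : F) = c₃ := by
    have h' : b * (c₂ : F) = (c₃ : F) * b := sub_eq_zero.mp e2
    rw [mul_comm ((c₃ : F)) b] at h'
    exact mul_left_cancel₀ hb h'
  -- M acts as the scalar c₃
  have hscal : ∀ w : Fin 2 → F, M *ᵥ w = (c₃ : F) • w := by
    intro w
    have hw := hrepr w
    calc M *ᵥ w = M *ᵥ ((B.repr w 0) • v₁ + (B.repr w 1) • v₂) := by rw [← hw]
    _ = (B.repr w 0) • (M *ᵥ v₁) + (B.repr w 1) • (M *ᵥ v₂) := by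
        rw [Matrix.mulVec_add, Matrix.mulVec_smul, Matrix.mulVec_smul]
    _ = (c₃ : F) • w := by
        rw [hc₁, hc₂, hc13, hc23]
        conv_rhs => rw [hw]
        module
  ext x
  show mobius h x = x
  conv_rhs => rw [← Projectivization.mk_rep x]
  conv_lhs => rw [← Projectivization.mk_rep x]
  rw [mobius_mk]
  exact aux_mk_eq_of_smul _ _ (c₃.ne_zero) (hscal x.rep)

lemma card_proj_line (F : Type*) [Field F] [Fintype F] :
    Nat.card (ℙ F (Fin 2 → F)) = Fintype.card F + 1 := by
  classical
  have e1 : ℙ F (Fin 2 → F) ≃ ℙ F (F × F) := by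
    refine Equiv.ofBijective
      (Projectivization.map (LinearEquiv.finTwoArrow F F).toLinearMap
        (LinearEquiv.finTwoArrow F F).injective) ⟨Projectivization.map_injective _ _, ?_⟩
    intro y
    induction' y using Projectivization.ind with w hw
    refine ⟨Projectivization.mk F ((LinearEquiv.finTwoArrow F F).symm w)
      ((LinearEquiv.finTwoArrow F F).symm.map_ne_zero_iff.mpr hw), ?_⟩
    rw [Projectivization.map_mk]
    apply (Projectivization.mk_eq_mk_iff F _ _ _ hw).mpr
    exact ⟨1, by simp⟩
  have e2 : ℙ F (F × F) ≃ Option F := e1.symm.trans (OnePoint.equivProjectivization F).symm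
  rw [Nat.card_congr (e1.trans e2), Nat.card_eq_fintype_card, Fintype.card_option]

lemma ncard_fixed_le {F : Type*} [Field F] [Fintype F] (h : GL (Fin 2) F)
    (hh : mobius h ≠ 1) : {x : ℙ F (Fin 2 → F) | mobius h x = x}.ncard ≤ 2 := by
  haveI : Finite (ℙ F (Fin 2 → F)) := Quotient.finite _
  by_contra hlt
  push_neg at hlt
  obtain ⟨a, ha, b, hb, c, hc, hab, hac, hbc⟩ := (Set.two_lt_ncard (Set.toFinite _)).mp hlt
  exact hh (mobius_eq_one_of_three_fixed h hab hac hbc ha hb hc)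

/-- If `g` has order `(q+1)/2` in `PGL(2,q)` (equivalently, the induced
permutation of the projective line has that order), with `q` an odd prime power
bigger than 3, then `⟨g⟩` has exactly two orbits on the projective line, each
of size `(q+1)/2`. -/
theorem two_orbits_of_order_half
    {F : Type*} [Field F] [Fintype F] {p r q : ℕ} (hp : p.Prime) (hq : q = p ^ r)
    (hodd : Odd q) (hq3 : 3 < q) (hcard : Fintype.card F = q)
    (g : GL (Fin 2) F) (hord : orderOf (mobius g) = (q + 1) / 2) :
    Nat.card (Quotient (MulAction.orbitRel (Subgroup.zpowers (mobius g))
        (ℙ F (Fin 2 → F)))) = 2 ∧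
    ∀ x : ℙ F (Fin 2 → F),
      Nat.card (MulAction.orbit (Subgroup.zpowers (mobius g)) x) = (q + 1) / 2 := by
  classical
  haveI hFin : Finite (ℙ F (Fin 2 → F)) := Quotient.finite _
  set n := (q + 1) / 2 with hn
  set σ := mobius g with hσdef
  obtain ⟨k, hk⟩ := hodd
  have hqn : q + 1 = 2 * n := by omega
  have hn3 : 3 ≤ n := by omega
  have hcardΩ : Nat.card (ℙ F (Fin 2 → F)) = 2 * n := by
    rw [card_proj_line F, hcard]; omega
  have hσord : orderOf σ = n := hord
  have key : ∀ m : ℕ, σ ^ m ≠ 1 → {x : ℙ F (Fin 2 → F) | (σ ^ m) x = x}.ncard ≤ 2 := by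
    intro m hm
    have hpow : σ ^ m = mobius (g ^ m) := by rw [hσdef, map_pow]
    simp only [hpow] at hm ⊢
    exact ncard_fixed_le _ hm
  have hσ2 : σ ^ 2 ≠ 1 := by
    intro e
    have h1 := Nat.le_of_dvd (by norm_num) (orderOf_dvd_of_pow_eq_one e)
    rw [hσord] at h1; omega
  have orbcard : ∀ x : ℙ F (Fin 2 → F),
      Nat.card (MulAction.orbit (Subgroup.zpowers σ) x) = MulAction.period σ x := by
    intro x
    rw [Nat.card_congr (MulAction.orbitZPowersEquiv σ x), Nat.card_zmod]
    exact MulAction.period_eq_minimalPeriod.symm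
  have hperdvd : ∀ x : ℙ F (Fin 2 → F), MulAction.period σ x ∣ n := fun x => by
    have h := MulAction.period_dvd_orderOf σ x; rwa [hσord] at h
  have hperpos : ∀ x : ℙ F (Fin 2 → F), 0 < MulAction.period σ x :=
    fun x => MulAction.period_pos_of_orderOf_pos (by rw [hσord]; omega) x
  set S : Set (ℙ F (Fin 2 → F)) := {x | (σ ^ 2) x = x} with hSdef
  have hS2 : S.ncard ≤ 2 := key 2 hσ2
  have dich : ∀ x : ℙ F (Fin 2 → F), MulAction.period σ x = n ∨ x ∈ S := by
    intro x
    by_cases hx : MulAction.period σ x = n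
    · exact Or.inl hx
    right
    have hmlt : MulAction.period σ x < n :=
      lt_of_le_of_ne (Nat.le_of_dvd (by omega) (hperdvd x)) hx
    have hσm : σ ^ MulAction.period σ x ≠ 1 := by
      intro e
      have h1 := Nat.le_of_dvd (hperpos x) (orderOf_dvd_of_pow_eq_one e)
      rw [hσord] at h1; omega
    have hsub : MulAction.orbit (Subgroup.zpowers σ) x ⊆
        {y : ℙ F (Fin 2 → F) | (σ ^ MulAction.period σ x) y = y} := by
      rintro y ⟨z, rfl⟩
      show σ ^ MulAction.period σ x • z • x = z • x
      obtain ⟨j, hj⟩ := Subgroup.mem_zpowers_iff.mp z.2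
      have hzx : (z : Equiv.Perm (ℙ F (Fin 2 → F))) • x = z • x := rfl
      rw [← hzx, ← hj, smul_smul, (((Commute.refl σ).zpow_right j).pow_left _).eq,
        mul_smul, MulAction.pow_period_smul]
    have hle : MulAction.period σ x ≤ 2 := by
      calc MulAction.period σ x = (MulAction.orbit (Subgroup.zpowers σ) x).ncard := by
            rw [← Nat.card_coe_set_eq, orbcard x]
      _ ≤ _ := Set.ncard_le_ncard hsub (Set.toFinite _)
      _ ≤ 2 := key _ hσm
    show σ ^ 2 • x = x
    rcases (by have := hperpos x; omega : MulAction.period σ x = 1 ∨ MulAction.period σ x = 2) with h1 | h2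
    · have hx1 : σ • x = x := by
        have h2 := MulAction.pow_period_smul σ x; rwa [h1, pow_one] at h2
      rw [pow_two, mul_smul, hx1, hx1]
    · have h3 := MulAction.pow_period_smul σ x; rwa [h2] at h3
  have horbn : ∀ y ∉ S, (MulAction.orbit (Subgroup.zpowers σ) y).ncard = n := by
    intro y hy
    rw [← Nat.card_coe_set_eq, orbcard y]
    rcases dich y with h | h
    · exact h
    · exact absurd h hy
  have hdisjS : ∀ y ∉ S, Disjoint (MulAction.orbit (Subgroup.zpowers σ) y) S := by
    intro y hy
    rw [Set.disjoint_left]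
    intro z hz hzS
    have hoeq : MulAction.orbit (Subgroup.zpowers σ) z = MulAction.orbit (Subgroup.zpowers σ) y :=
      MulAction.orbit_eq_iff.mpr hz
    have h1 : MulAction.period σ z = n := by
      rw [← orbcard z, Nat.card_coe_set_eq, hoeq]
      exact horbn y hy
    have h2 : MulAction.period σ z ≤ 2 := MulAction.period_le_of_fixed (by norm_num) hzS
    omega
  have hSempty : S = ∅ := by
    rw [← Set.not_nonempty_iff_eq_empty]
    rintro ⟨x₀, hx₀⟩
    have hS1 : 0 < S.ncard := (Set.ncard_pos (Set.toFinite _)).mpr ⟨x₀, hx₀⟩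
    have hy₁ : ∃ y₁, y₁ ∉ S := by
      by_contra h'
      push_neg at h'
      have he : S = Set.univ := Set.eq_univ_of_forall h'
      rw [he, Set.ncard_univ, hcardΩ] at hS2; omega
    obtain ⟨y₁, hy₁⟩ := hy₁
    have hy₂ : ∃ y₂, y₂ ∉ S ∪ MulAction.orbit (Subgroup.zpowers σ) y₁ := by
      by_contra h'
      push_neg at h'
      have he : S ∪ MulAction.orbit (Subgroup.zpowers σ) y₁ = Set.univ :=
        Set.eq_univ_of_forall h'
      have hle := Set.ncard_union_le S (MulAction.orbit (Subgroup.zpowers σ) y₁)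
      rw [he, Set.ncard_univ, hcardΩ, horbn y₁ hy₁] at hle
      omega
    obtain ⟨y₂, hy₂⟩ := hy₂
    have hy₂S : y₂ ∉ S := fun h' => hy₂ (Set.mem_union_left _ h')
    have hy₂O : y₂ ∉ MulAction.orbit (Subgroup.zpowers σ) y₁ := fun h' =>
      hy₂ (Set.mem_union_right _ h')
    have hdisj12 : Disjoint (MulAction.orbit (Subgroup.zpowers σ) y₁)
        (MulAction.orbit (Subgroup.zpowers σ) y₂) := by
      rw [Set.disjoint_left]
      intro z hz1 hz2
      have e1 := MulAction.orbit_eq_iff.mpr hz1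
      have e2 := MulAction.orbit_eq_iff.mpr hz2
      exact hy₂O (by rw [← e1, e2]; exact MulAction.mem_orbit_self y₂)
    have hcount := Set.ncard_le_ncard
      (Set.subset_univ ((MulAction.orbit (Subgroup.zpowers σ) y₁ ∪
        MulAction.orbit (Subgroup.zpowers σ) y₂) ∪ S)) (Set.toFinite _)
    rw [Set.ncard_union_eq ((hdisjS y₁ hy₁).union_left (hdisjS y₂ hy₂S))
        (Set.toFinite _) (Set.toFinite _),
      Set.ncard_union_eq hdisj12 (Set.toFinite _) (Set.toFinite _),
      horbn y₁ hy₁, horbn y₂ hy₂S, Set.ncard_univ, hcardΩ] at hcount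
    omega
  have hpern : ∀ x : ℙ F (Fin 2 → F), MulAction.period σ x = n := by
    intro x
    rcases dich x with h | h
    · exact h
    · rw [hSempty] at h; exact absurd h (Set.notMem_empty x)
  constructor
  · show Nat.card (MulAction.orbitRel.Quotient (Subgroup.zpowers σ) (ℙ F (Fin 2 → F))) = 2
    have e : ℙ F (Fin 2 → F) ≃
        (MulAction.orbitRel.Quotient (Subgroup.zpowers σ) (ℙ F (Fin 2 → F))) × ZMod n := by
      refine (MulAction.selfEquivSigmaOrbits (Subgroup.zpowers σ) _).trans ?_
      refine (Equiv.sigmaCongrRight fun ω => ?_).trans (Equiv.sigmaEquivProd _ _)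
      exact (MulAction.orbitZPowersEquiv σ ω.out).trans
        (Equiv.cast (congrArg ZMod (MulAction.period_eq_minimalPeriod.symm.trans (hpern ω.out))))
    have hcard2 : Nat.card (ℙ F (Fin 2 → F)) =
        Nat.card (MulAction.orbitRel.Quotient (Subgroup.zpowers σ) (ℙ F (Fin 2 → F))) * n := by
      rw [Nat.card_congr e, Nat.card_prod, Nat.card_zmod]
    rw [hcardΩ] at hcard2
    exact Nat.eq_of_mul_eq_mul_right (by omega) (hcard2.symm.trans (by ring))
  · intro x
    rw [orbcard x, hpern x]
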